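/- Let N ≥ 5 be an integer, let Ω ⊂ ℝ^N be a bounded open set with B(0,ρ) ⊆ Ω for some ρ > 0, and fix η ∈ (0,1). Then there exist C > 0 and ε₀ > 0 such that for every ε ∈ (0, ε₀), every λ ∈ (η, η^{−1}) and every τ ∈ ℝ^N with |τ| < η, setting λ_ε = λ ε^{−1/2}, ξ_ε = τ/λ_ε, and Ω_ε = Ω \ closedBall(0,ε), one has ∫_{ℝ^N \ Ω_ε} U_{λ_ε,ξ_ε}(x)^{2N/(N−2)} dx ≤ C ( λ_ε^{−N} + (ε λ_ε)^N ) ≤ C' ε^{N/2} for some C' depending only on C, λ, η. -/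

import Mathlib

open MeasureTheory Metric

/-- The standard bubble `U_{λ,ξ}(x) = λ^{(N-2)/2} (1+λ²|x-ξ|²)^{-(N-2)/2}`. -/
noncomputable def bubble (N : ℕ) (lam : ℝ) (ξ x : EuclideanSpace ℝ (Fin N)) : ℝ :=
  lam ^ (((N : ℝ) - 2) / 2) / (1 + lam ^ 2 * ‖x - ξ‖ ^ 2) ^ (((N : ℝ) - 2) / 2)

lemma bubble_rpow (N : ℕ) (hN : 5 ≤ N) {L : ℝ} (hL : 0 < L)
    (ξ x : EuclideanSpace ℝ (Fin N)) :
    bubble N L ξ x ^ (2 * (N : ℝ) / ((N : ℝ) - 2))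
      = (L / (1 + L ^ 2 * ‖x - ξ‖ ^ 2)) ^ N := by
  have hD : (0:ℝ) < 1 + L ^ 2 * ‖x - ξ‖ ^ 2 := by positivity
  have hN2 : ((N:ℝ) - 2) ≠ 0 := by
    have : (5:ℝ) ≤ N := by exact_mod_cast hN
    nlinarith
  have h1 : bubble N L ξ x = (L / (1 + L ^ 2 * ‖x - ξ‖ ^ 2)) ^ (((N:ℝ) - 2)/2) := by
    rw [bubble, Real.div_rpow hL.le hD.le]
  rw [h1, ← Real.rpow_natCast (L / (1 + L ^ 2 * ‖x - ξ‖ ^ 2)) N,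
    ← Real.rpow_mul (by positivity)]
  congr 1
  field_simp

lemma aux_int (N : ℕ) (hN : 5 ≤ N) {ρ : ℝ} (hρ : 0 < ρ) :
    IntegrableOn (fun x : EuclideanSpace ℝ (Fin N) => (‖x‖ ^ (2*N))⁻¹)
      (Metric.ball 0 ρ)ᶜ := by
  have hdim : (Module.finrank ℝ (EuclideanSpace ℝ (Fin N)) : ℝ) < (2*N : ℝ) := by
    rw [finrank_euclideanSpace_fin]
    have : (5:ℝ) ≤ N := by exact_mod_cast hN
    nlinarith
  have hint : Integrable (fun x : EuclideanSpace ℝ (Fin N) => (1 + ‖x‖) ^ (-(2*N : ℝ))) :=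
    integrable_one_add_norm hdim
  have hmeas : AEStronglyMeasurable (fun x : EuclideanSpace ℝ (Fin N) => (‖x‖ ^ (2*N))⁻¹)
      (volume.restrict (Metric.ball (0:EuclideanSpace ℝ (Fin N)) ρ)ᶜ) := by
    apply Measurable.aestronglyMeasurable; fun_prop
  refine Integrable.mono' ((hint.const_mul ((1 + ρ⁻¹) ^ (2*N))).restrict) hmeas ?_
  rw [ae_restrict_iff' measurableSet_ball.compl]
  filter_upwards with x hx
  simp only [Set.mem_compl_iff, mem_ball, dist_zero_right, not_lt] at hx
  have hx0 : 0 < ‖x‖ := lt_of_lt_of_le hρ hx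
  have key : 1 + ‖x‖ ≤ (1 + ρ⁻¹) * ‖x‖ := by
    have : 1 ≤ ρ⁻¹ * ‖x‖ := by
      calc (1:ℝ) = ρ⁻¹ * ρ := by field_simp
        _ ≤ ρ⁻¹ * ‖x‖ := by gcongr
    nlinarith [norm_nonneg x]
  have h1 : ‖(‖x‖ ^ (2*N))⁻¹‖ = (‖x‖ ^ (2*N))⁻¹ := by
    rw [Real.norm_eq_abs, abs_of_nonneg]; positivity
  rw [h1]
  have h2 : (1 + ‖x‖) ^ (-(2*N:ℝ)) = ((1 + ‖x‖) ^ (2*N))⁻¹ := by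
    rw [← Real.rpow_natCast (1+‖x‖) (2*N), ← Real.rpow_neg (by positivity)]
    norm_num
  rw [h2]
  have hstep : ‖x‖⁻¹ ≤ (1+ρ⁻¹) * (1+‖x‖)⁻¹ := by
    rw [← one_div, ← one_div (1+‖x‖), mul_one_div, div_le_div_iff₀ hx0 (by positivity)]
    linarith [key]
  calc (‖x‖ ^ (2*N))⁻¹ = ((‖x‖)⁻¹)^(2*N) := by rw [inv_pow]
    _ ≤ ((1+ρ⁻¹) * (1+‖x‖)⁻¹)^(2*N) := pow_le_pow_left₀ (by positivity) hstep _
    _ = (1+ρ⁻¹)^(2*N) * ((1+‖x‖)^(2*N))⁻¹ := by rw [mul_pow, inv_pow]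

set_option maxHeartbeats 1000000 in
/-- Tail estimate for the `2^*`-power of the bubble outside the pierced domain
`Ω_ε = Ω \ B̄(0,ε)`, with `λ_ε = λ ε^{-1/2}` and `ξ_ε = τ/λ_ε`:
`∫_{ℝ^N \ Ω_ε} U_{λ_ε,ξ_ε}^{2N/(N-2)} ≤ C (λ_ε^{-N} + (ε λ_ε)^N) ≤ C' ε^{N/2}`. -/
theorem bubble_tail_estimate_crit (N : ℕ) (hN : 5 ≤ N)
    (Ω : Set (EuclideanSpace ℝ (Fin N))) (hΩo : IsOpen Ω) (hΩb : Bornology.IsBounded Ω)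
    (ρ : ℝ) (hρ : 0 < ρ) (hball : Metric.ball (0 : EuclideanSpace ℝ (Fin N)) ρ ⊆ Ω)
    (η : ℝ) (hη : η ∈ Set.Ioo (0 : ℝ) 1) :
    ∃ C : ℝ, 0 < C ∧ ∃ ε₀ : ℝ, 0 < ε₀ ∧
      ∀ lam ∈ Set.Ioo η η⁻¹, ∃ C' : ℝ, 0 < C' ∧
        ∀ ε ∈ Set.Ioo (0 : ℝ) ε₀, ∀ τ : EuclideanSpace ℝ (Fin N), ‖τ‖ < η →
          (∫ x in (Ω \ Metric.closedBall 0 ε)ᶜ,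
              bubble N (lam * ε ^ (-(1 : ℝ) / 2))
                ((lam * ε ^ (-(1 : ℝ) / 2))⁻¹ • τ) x ^ (2 * (N : ℝ) / ((N : ℝ) - 2))) ≤
            C * ((lam * ε ^ (-(1 : ℝ) / 2)) ^ (-(N : ℝ)) +
              (ε * (lam * ε ^ (-(1 : ℝ) / 2))) ^ (N : ℝ)) ∧
          C * ((lam * ε ^ (-(1 : ℝ) / 2)) ^ (-(N : ℝ)) +
              (ε * (lam * ε ^ (-(1 : ℝ) / 2))) ^ (N : ℝ)) ≤ C' * ε ^ ((N : ℝ) / 2) := by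
  obtain ⟨hη0, hη1⟩ := hη
  set I : ℝ := ∫ x in (Metric.ball (0:EuclideanSpace ℝ (Fin N)) ρ)ᶜ, (‖x‖ ^ (2*N))⁻¹ with hIdef
  have hI0 : 0 ≤ I := setIntegral_nonneg measurableSet_ball.compl (fun x _ => by positivity)
  set K : ℝ := 2^(2*N) * I with hKdef
  have hK0 : 0 ≤ K := by positivity
  set vB : ℝ := (volume (Metric.ball (0:EuclideanSpace ℝ (Fin N)) 1)).toReal with hvBdef
  have hvB0 : 0 ≤ vB := ENNReal.toReal_nonneg
  set C : ℝ := max 1 (max K vB) with hCdef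
  have hC1 : (1:ℝ) ≤ C := le_max_left _ _
  have hC0 : 0 < C := lt_of_lt_of_le one_pos hC1
  have hKC : K ≤ C := le_trans (le_max_left K vB) (le_max_right 1 _)
  have hvBC : vB ≤ C := le_trans (le_max_right K vB) (le_max_right 1 _)
  refine ⟨C, hC0, min 1 (ρ^2/4), by positivity, ?_⟩
  intro lam hlam
  have hlam0 : 0 < lam := hη0.trans hlam.1
  refine ⟨C * (lam ^ (-(N:ℝ)) + lam ^ ((N:ℝ))), by positivity, ?_⟩
  intro ε hε τ hτ
  obtain ⟨hε0, hεlt⟩ := hε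
  have hε1 : ε < 1 := lt_of_lt_of_le hεlt (min_le_left _ _)
  have hερ : ε ≤ ρ^2/4 := le_trans hεlt.le (min_le_right _ _)
  set u : ℝ := ε ^ ((1:ℝ)/2) with hu
  have hu0 : 0 < u := Real.rpow_pos_of_pos hε0 _
  have huneg : ε ^ (-(1:ℝ)/2) = u⁻¹ := by
    rw [hu, neg_div, Real.rpow_neg hε0.le]
  have huu : u * u = ε := by
    rw [hu, ← Real.rpow_add hε0]; norm_num
  set L : ℝ := lam * ε ^ (-(1:ℝ)/2) with hLdef
  have hLu : L = lam * u⁻¹ := by rw [hLdef, huneg]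
  have hL0 : 0 < L := by rw [hLu]; positivity
  have hεL : ε * L = lam * u := by
    rw [hLu, ← huu]; field_simp
  set ξ : EuclideanSpace ℝ (Fin N) := L⁻¹ • τ with hξdef
  -- ‖ξ‖ ≤ ρ/2
  have huρ : u ≤ ρ/2 := by
    have h1 : u ≤ (ρ^2/4) ^ ((1:ℝ)/2) := Real.rpow_le_rpow hε0.le hερ (by norm_num)
    have h2 : (ρ^2/4 : ℝ) ^ ((1:ℝ)/2) = ρ/2 := by
      rw [show (ρ^2/4 : ℝ) = (ρ/2)^2 by ring, ← Real.rpow_natCast (ρ/2) 2,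
        ← Real.rpow_mul (by positivity)]
      norm_num
    linarith
  have hξρ : ‖ξ‖ ≤ ρ/2 := by
    have h1 : ‖ξ‖ = L⁻¹ * ‖τ‖ := by
      rw [hξdef, norm_smul, Real.norm_eq_abs, abs_of_pos (by positivity)]
    have h2 : L⁻¹ ≤ u / η := by
      rw [hLu, mul_inv, inv_inv]
      have : lam⁻¹ ≤ η⁻¹ := by
        apply inv_anti₀ hη0 hlam.1.le
      calc lam⁻¹ * u ≤ η⁻¹ * u := by gcongr
        _ = u / η := by rw [inv_eq_one_div]; ring
    have h3 : ‖ξ‖ ≤ (u/η) * η := by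
      rw [h1]
      have := norm_nonneg τ
      have hu' : 0 ≤ u/η := by positivity
      calc L⁻¹ * ‖τ‖ ≤ (u/η) * ‖τ‖ := by gcongr
        _ ≤ (u/η) * η := by gcongr
    have h4 : (u/η) * η = u := by field_simp
    linarith
  -- the function f
  set f : EuclideanSpace ℝ (Fin N) → ℝ := fun x => (L / (1 + L ^ 2 * ‖x - ξ‖ ^ 2)) ^ N with hfdef
  have hfc : Continuous f := by
    apply Continuous.pow
    apply continuous_const.div
    · fun_prop
    · intro x; positivity
  have hfnn : ∀ x, 0 ≤ f x := fun x => by rw [hfdef]; positivity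
  have hfle : ∀ x, f x ≤ L^N := by
    intro x
    rw [hfdef]
    apply pow_le_pow_left₀ (by positivity)
    apply div_le_self hL0.le
    nlinarith [sq_nonneg (L * ‖x - ξ‖)]
  -- pointwise bound on Ωᶜ
  have hbound : ∀ x ∈ Ωᶜ, f x ≤ (L^N)⁻¹ * (2^(2*N) * (‖x‖^(2*N))⁻¹) := by
    intro x hx
    have hxρ : ρ ≤ ‖x‖ := by
      by_contra h
      exact hx (hball (by simpa [mem_ball, dist_zero_right] using lt_of_not_ge h))
    have hr : ‖x‖/2 ≤ ‖x - ξ‖ := by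
      have := norm_sub_norm_le x ξ
      linarith
    have hr0 : 0 < ‖x - ξ‖ := by linarith
    set r : ℝ := ‖x - ξ‖ with hrdef
    have step1 : L / (1 + L^2 * r^2) ≤ (L * r^2)⁻¹ := by
      have he : (L*r^2)⁻¹ * (1 + L^2*r^2) = (L*r^2)⁻¹ + L := by
        field_simp
      rw [div_le_iff₀ (by positivity), he]
      have : (0:ℝ) ≤ (L*r^2)⁻¹ := by positivity
      linarith
    have step2 : f x ≤ ((L * r^2)⁻¹)^N := by
      rw [hfdef]
      exact pow_le_pow_left₀ (by positivity) step1 N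
    have step3 : ((L * r^2)⁻¹)^N = (L^N)⁻¹ * (r^(2*N))⁻¹ := by
      rw [mul_inv, mul_pow, inv_pow, inv_pow, pow_mul]
    have h5 : ‖x‖^(2*N) ≤ 2^(2*N) * r^(2*N) := by
      calc ‖x‖^(2*N) = (2 * (‖x‖/2))^(2*N) := by ring_nf
        _ = 2^(2*N) * (‖x‖/2)^(2*N) := by rw [mul_pow]
        _ ≤ 2^(2*N) * r^(2*N) := by gcongr
    have step4 : (r^(2*N))⁻¹ ≤ 2^(2*N) * (‖x‖^(2*N))⁻¹ := by
      rw [inv_eq_one_div, inv_eq_one_div, mul_one_div,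
        div_le_div_iff₀ (pow_pos hr0 _) (pow_pos (lt_of_lt_of_le hρ hxρ) _)]
      linarith
    calc f x ≤ ((L * r^2)⁻¹)^N := step2
      _ = (L^N)⁻¹ * (r^(2*N))⁻¹ := step3
      _ ≤ (L^N)⁻¹ * (2^(2*N) * (‖x‖^(2*N))⁻¹) := by gcongr
  -- integrability
  have hΩc_sub : Ωᶜ ⊆ (Metric.ball (0:EuclideanSpace ℝ (Fin N)) ρ)ᶜ :=
    Set.compl_subset_compl.mpr hball
  have hIball : IntegrableOn f (Metric.closedBall (0:EuclideanSpace ℝ (Fin N)) ε) :=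
    hfc.continuousOn.integrableOn_compact (isCompact_closedBall _ _)
  have hgI : IntegrableOn
      (fun x : EuclideanSpace ℝ (Fin N) => (L^N)⁻¹ * (2^(2*N) * (‖x‖^(2*N))⁻¹)) Ωᶜ :=
    (((aux_int N hN hρ).mono_set hΩc_sub).const_mul _).const_mul _
  have hIcomp : IntegrableOn f Ωᶜ := by
    refine hgI.mono' hfc.aestronglyMeasurable.restrict ?_
    rw [ae_restrict_iff' hΩo.isClosed_compl.measurableSet]
    filter_upwards with x hx
    rw [Real.norm_eq_abs, abs_of_nonneg (hfnn x)]
    exact hbound x hx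
  -- split the integral
  have hS : (Ω \ Metric.closedBall (0:EuclideanSpace ℝ (Fin N)) ε)ᶜ
      = Ωᶜ ∪ (Metric.closedBall (0:EuclideanSpace ℝ (Fin N)) ε ∩ Ω) := by
    ext x; simp only [Set.mem_compl_iff, Set.mem_diff, Set.mem_union, Set.mem_inter_iff]
    tauto
  have hdisj : Disjoint Ωᶜ (Metric.closedBall (0:EuclideanSpace ℝ (Fin N)) ε ∩ Ω) :=
    Set.disjoint_left.mpr (fun x hx hx2 => hx hx2.2)
  have hmeas2 : MeasurableSet (Metric.closedBall (0:EuclideanSpace ℝ (Fin N)) ε ∩ Ω) :=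
    measurableSet_closedBall.inter hΩo.measurableSet
  -- bound on Ωᶜ
  have hIcompbound : (∫ x in Ωᶜ, f x) ≤ (L^N)⁻¹ * K := by
    calc (∫ x in Ωᶜ, f x) ≤ ∫ x in Ωᶜ, (L^N)⁻¹ * (2^(2*N) * (‖x‖^(2*N))⁻¹) :=
          setIntegral_mono_on hIcomp hgI hΩo.isClosed_compl.measurableSet hbound
      _ = (L^N)⁻¹ * (2^(2*N) * ∫ x in Ωᶜ, (‖x‖^(2*N))⁻¹) := by
          rw [integral_const_mul, integral_const_mul]
      _ ≤ (L^N)⁻¹ * (2^(2*N) * I) := by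
          have hmono : (∫ x in Ωᶜ, (‖x‖^(2*N))⁻¹) ≤ I :=
            setIntegral_mono_set (aux_int N hN hρ)
              (Filter.Eventually.of_forall (fun x => by positivity))
              (HasSubset.Subset.eventuallyLE hΩc_sub)
          gcongr
      _ = (L^N)⁻¹ * K := by rw [hKdef]
  -- bound on the ball
  have hballbound : (∫ x in Metric.closedBall (0:EuclideanSpace ℝ (Fin N)) ε, f x)
      ≤ vB * (ε * L)^N := by
    have h1 : (∫ x in Metric.closedBall (0:EuclideanSpace ℝ (Fin N)) ε, f x)
        ≤ L^N * (volume (Metric.closedBall (0:EuclideanSpace ℝ (Fin N)) ε)).toReal := by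
      refine le_trans (le_abs_self _) ?_
      exact norm_setIntegral_le_of_norm_le_const (measure_closedBall_lt_top (μ := volume))
        (fun x _ => by rw [Real.norm_eq_abs, abs_of_nonneg (hfnn x)]; exact hfle x)
    have h2 : (volume (Metric.closedBall (0:EuclideanSpace ℝ (Fin N)) ε)).toReal
        = ε^N * vB := by
      rw [Measure.addHaar_closedBall _ _ hε0.le, ENNReal.toReal_mul,
        ENNReal.toReal_ofReal (by positivity), finrank_euclideanSpace_fin, hvBdef]
    rw [h2] at h1
    calc (∫ x in Metric.closedBall (0:EuclideanSpace ℝ (Fin N)) ε, f x)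
        ≤ L^N * (ε^N * vB) := h1
      _ = vB * (ε * L)^N := by rw [mul_pow]; ring
  -- main integral bound
  have hmain : (∫ x in (Ω \ Metric.closedBall (0:EuclideanSpace ℝ (Fin N)) ε)ᶜ, f x)
      ≤ C * ((L^N)⁻¹ + (ε*L)^N) := by
    rw [hS, setIntegral_union hdisj hmeas2 hIcomp (hIball.mono_set Set.inter_subset_left)]
    have hmid : (∫ x in Metric.closedBall (0:EuclideanSpace ℝ (Fin N)) ε ∩ Ω, f x)
        ≤ vB * (ε * L)^N := by
      refine le_trans ?_ hballbound
      exact setIntegral_mono_set hIball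
        (Filter.Eventually.of_forall (fun x => hfnn x))
        (HasSubset.Subset.eventuallyLE Set.inter_subset_left)
    have p1 : (0:ℝ) ≤ (L^N)⁻¹ := by positivity
    have p2 : (0:ℝ) ≤ (ε*L)^N := by positivity
    nlinarith [hIcompbound, hmid]
  -- rewrite integrand
  have hint_eq : (∫ x in (Ω \ Metric.closedBall (0:EuclideanSpace ℝ (Fin N)) ε)ᶜ,
      bubble N L ξ x ^ (2 * (N : ℝ) / ((N : ℝ) - 2)))
      = ∫ x in (Ω \ Metric.closedBall (0:EuclideanSpace ℝ (Fin N)) ε)ᶜ, f x := by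
    apply integral_congr_ae
    filter_upwards with x
    rw [bubble_rpow N hN hL0 ξ x, hfdef]
  -- rpow rewrites
  have hrw1 : L ^ (-(N:ℝ)) = (L^N)⁻¹ := by
    rw [Real.rpow_neg hL0.le, Real.rpow_natCast]
  have hrw2 : (ε * L) ^ ((N:ℝ)) = (ε*L)^N := Real.rpow_natCast _ N
  have hrwlam1 : lam ^ (-(N:ℝ)) = (lam^N)⁻¹ := by
    rw [Real.rpow_neg hlam0.le, Real.rpow_natCast]
  have hrwlam2 : lam ^ ((N:ℝ)) = lam^N := Real.rpow_natCast _ N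
  have hrwε : ε ^ ((N:ℝ)/2) = u^N := by
    rw [hu, ← Real.rpow_natCast (ε ^ ((1:ℝ)/2)) N, ← Real.rpow_mul hε0.le]
    congr 1; ring
  have hLN : (L^N)⁻¹ = (lam^N)⁻¹ * u^N := by
    rw [hLu, mul_pow, inv_pow, mul_inv, inv_inv]
  have hεLN : (ε*L)^N = lam^N * u^N := by rw [hεL, mul_pow]
  constructor
  · rw [hint_eq, hrw1, hrw2]
    exact hmain
  · rw [hrw1, hrw2, hrwlam1, hrwlam2, hrwε, hLN, hεLN]
    apply le_of_eq
    ring
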